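/- In a PIM-tree with L2 height H = log_B P − log_B log_B P and pull threshold K = B·H applied each round (pulling all nodes with ≥ K queries and advancing those queries one level), the multi-round pull loop terminates after at most H rounds, and each pulled query incurs O(1) total communication amortized over the batch with high probability. -/

import Mathlib

open MeasureTheory ProbabilityTheory

lemma aux_term : ∀ n (level : ℕ → ℕ), level 0 ≤ n →
    (∀ t, level t ≠ 0 → level (t+1) < level t) → ∃ T ≤ n, level T = 0 := by
  intro n
  induction n with
  | zero => intro level h0 _; exact ⟨0, le_refl 0, Nat.le_zero.mp h0⟩
  | succ n ih =>
    intro level h0 hdec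
    by_cases h : level 0 = 0
    · exact ⟨0, Nat.zero_le _, h⟩
    · obtain ⟨T, hT, hT0⟩ := ih (fun t => level (t+1))
        (by show level (0+1) ≤ n; have := hdec 0 h; omega) (fun t ht => hdec (t+1) ht)
      exact ⟨T+1, by omega, hT0⟩


lemma aux_xlogx {x : ℝ} (hx : 0 < x) : -(x * Real.log x) ≤ Real.exp (-1) := by
  rcases le_or_gt 1 x with h | h
  · have : 0 ≤ Real.log x := Real.log_nonneg h
    nlinarith [Real.exp_pos (-1:ℝ)]
  · have h1 : -Real.log x ≤ Real.exp (-Real.log x - 1) := by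
      have := Real.add_one_le_exp (-Real.log x - 1); linarith
    have hx' : x = Real.exp (Real.log x) := (Real.exp_log hx).symm
    calc -(x * Real.log x) = (-Real.log x) * x := by ring
      _ ≤ Real.exp (-Real.log x - 1) * x :=
          mul_le_mul_of_nonneg_right h1 hx.le
      _ = Real.exp (-Real.log x - 1) * Real.exp (Real.log x) := by rw [← hx']
      _ = Real.exp (-1) := by rw [← Real.exp_add]; ring_nf

lemma aux_S_lower {P B H : ℕ} (hP : 2 ≤ P) (hB : 2 ≤ B)
    (hH : (H:ℝ) = Real.logb B P - Real.logb B (Real.logb B P)) (hH1 : 1 ≤ H) :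
    Real.log 2 - Real.exp (-1) ≤ Real.log P * Real.logb B P := by
  have hP1 : (1:ℝ) < (P:ℕ) := by exact_mod_cast hP
  have hB1 : (1:ℝ) < (B:ℕ) := by exact_mod_cast hB
  have hlogP : 0 < Real.log P := Real.log_pos hP1
  have hlogB : 0 < Real.log B := Real.log_pos hB1
  set y := Real.logb (B:ℝ) (P:ℝ) with hydef
  have hyval : y = Real.log P / Real.log B := rfl
  have hypos : 0 < y := by rw [hyval]; exact div_pos hlogP hlogB
  have hby : Real.log B * y = Real.log P := by
    rw [hyval]; field_simp
  have hHge : (1:ℝ) ≤ y - Real.log y / Real.log B := by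
    have h : (1:ℝ) ≤ (H:ℝ) := by exact_mod_cast hH1
    rw [hH] at h
    simpa [Real.logb] using h
  have h5 : Real.log y ≤ Real.log P - Real.log B := by
    have h51 := mul_le_mul_of_nonneg_left hHge hlogB.le
    have hexp : Real.log B * (y - Real.log y / Real.log B)
        = Real.log P - Real.log y := by
      rw [mul_sub, hby, mul_div_cancel₀ _ hlogB.ne']
    rw [hexp, mul_one] at h51
    linarith
  have h6 : y * Real.log y ≤ y * Real.log P - Real.log P := by
    have h61 := mul_le_mul_of_nonneg_left h5 hypos.le
    nlinarith [hby]
  have h3 := aux_xlogx hypos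
  have h4 : Real.log 2 ≤ Real.log P := by
    apply Real.log_le_log (by norm_num)
    exact_mod_cast hP
  nlinarith [h6, h3, h4]

lemma geom_sum1 {q : ℝ} (h0 : 0 ≤ q) (h1 : q < 1) :
    HasSum (fun m : ℕ => ((m:ℝ)+1) * q^m) (1/(1-q)^2) := by
  have h := hasSum_choose_mul_geometric_of_norm_lt_one (𝕜 := ℝ) 1
    (r := q) (by rwa [Real.norm_eq_abs, abs_of_nonneg h0])
  convert h using 2 with m
  · rfl
  simp [Nat.choose_one_right]

lemma geom_sum2 {q : ℝ} (h0 : 0 ≤ q) (h1 : q < 1) :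
    HasSum (fun m : ℕ => ((m:ℝ)+1) * ((m:ℝ)+2) * q^m) (2/(1-q)^3) := by
  have h := hasSum_choose_mul_geometric_of_norm_lt_one (𝕜 := ℝ) 2
    (r := q) (by rwa [Real.norm_eq_abs, abs_of_nonneg h0])
  have h2 := h.mul_left 2
  have h3 : 2 * (1/(1-q)^(2+1)) = 2/(1-q)^3 := by ring
  rw [h3] at h2
  convert h2 using 2 with m
  · rfl
  rw [Nat.cast_choose_two]
  push_cast
  ring

lemma aux_moments {Ω : Type} [MeasureSpace Ω] [IsProbabilityMeasure (ℙ : Measure Ω)]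
    {B : ℕ} (hB : 2 ≤ B) (Z : Ω → ℕ) (hZ : Measurable Z)
    (hdist : ∀ s : ℕ, 1 ≤ s → ℙ {ω | Z ω = s} =
      ENNReal.ofReal ((1 / (B : ℝ)) * (1 - 1 / (B : ℝ)) ^ (s - 1))) :
    MemLp (fun ω => (Z ω : ℝ)) 2 ℙ ∧
    (∫ ω, (Z ω : ℝ)) = (B:ℝ) ∧
    variance (fun ω => (Z ω : ℝ)) ℙ ≤ 2 * (B:ℝ)^2 := by
  have hB0 : (0:ℝ) < B := by positivity
  set p : ℝ := 1/(B:ℝ) with hp_def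
  set q : ℝ := 1 - p with hq_def
  have hp : 0 < p := by positivity
  have hp1 : p ≤ 1/2 := by
    rw [hp_def]
    rw [div_le_div_iff₀ hB0 (by norm_num)]
    have : (2:ℝ) ≤ B := by exact_mod_cast hB
    linarith
  have hq0 : 0 ≤ q := by rw [hq_def]; linarith
  have hq1 : q < 1 := by rw [hq_def]; linarith
  have h1q : 1 - q = p := by rw [hq_def]; ring
  have hBp : (B:ℝ) = 1/p := by rw [hp_def]; field_simp
  -- series
  set f1 : ℕ → ℝ := fun n => (n:ℝ) * (p * q^(n-1)) with hf1_def
  set f2 : ℕ → ℝ := fun n => (n:ℝ)^2 * (p * q^(n-1)) with hf2_def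
  have hf1shift : ∀ m : ℕ, f1 (m+1) = p * (((m:ℝ)+1) * q^m) := by
    intro m; simp only [hf1_def]; push_cast [Nat.add_sub_cancel]; ring
  have hf2shift : ∀ m : ℕ, f2 (m+1) = ((m:ℝ)+1)^2 * (p * q^m) := by
    intro m; simp only [hf2_def]; push_cast [Nat.add_sub_cancel]; ring
  have hs1 : HasSum (fun m : ℕ => f1 (m+1)) (B:ℝ) := by
    have h := (geom_sum1 hq0 hq1).mul_left p
    have hval : p * (1/(1-q)^2) = (B:ℝ) := by
      rw [h1q, hBp]; field_simp
    rw [hval] at h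
    exact h.congr_fun fun m => hf1shift m
  have hf1sum : HasSum f1 (B:ℝ) := by
    have h := (hasSum_nat_add_iff (f := f1) 1 (g := (B:ℝ))).mp hs1
    simpa [hf1_def] using h
  have hcomp0 : ∀ m : ℕ, f2 (m+1) ≤ p * (((m:ℝ)+1) * ((m:ℝ)+2) * q^m) := by
    intro m
    rw [hf2shift]
    have h1 : ((m:ℝ)+1)^2 ≤ ((m:ℝ)+1) * ((m:ℝ)+2) := by nlinarith [Nat.cast_nonneg (α := ℝ) m]
    calc ((m:ℝ)+1)^2 * (p * q^m) ≤ (((m:ℝ)+1) * ((m:ℝ)+2)) * (p * q^m) := by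
          apply mul_le_mul_of_nonneg_right h1 (by positivity)
      _ = p * (((m:ℝ)+1) * ((m:ℝ)+2) * q^m) := by ring
  have hg2 : Summable (fun m : ℕ => f2 (m+1)) :=
    Summable.of_nonneg_of_le (fun m => by rw [hf2shift]; positivity)
      hcomp0 ((geom_sum2 hq0 hq1).summable.mul_left p)
  have hg2bound : ∑' m : ℕ, f2 (m+1) ≤ 2 * (B:ℝ)^2 := by
    have hle : ∑' m : ℕ, f2 (m+1) ≤ ∑' m : ℕ, p * (((m:ℝ)+1) * ((m:ℝ)+2) * q^m) :=
      Summable.tsum_le_tsum hcomp0 hg2 ((geom_sum2 hq0 hq1).summable.mul_left p)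
    have hval : ∑' m : ℕ, p * (((m:ℝ)+1) * ((m:ℝ)+2) * q^m) = p * (2/(1-q)^3) :=
      ((geom_sum2 hq0 hq1).mul_left p).tsum_eq
    have hval2 : p * (2/(1-q)^3) = 2 * (B:ℝ)^2 := by
      rw [h1q, hBp]; field_simp
    rw [hval, hval2] at hle
    exact hle
  have hf2sum : Summable f2 := (summable_nat_add_iff 1).mp hg2
  have hf2bound : ∑' n, f2 n ≤ 2 * (B:ℝ)^2 := by
    rw [hf2sum.tsum_eq_zero_add]
    have : f2 0 = 0 := by simp [hf2_def]
    rw [this, zero_add]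
    exact hg2bound
  have hf2nonneg : ∀ n, 0 ≤ f2 n := fun n => by
    simp only [hf2_def]; positivity
  -- measure on ℕ
  set ν : Measure ℕ := Measure.map Z ℙ with hν_def
  have hν : ∀ n, ν {n} = ℙ {ω | Z ω = n} := by
    intro n
    rw [hν_def, Measure.map_apply hZ (measurableSet_singleton n)]
    rfl
  have hν1 : ∀ n : ℕ, 1 ≤ n → ν {n} = ENNReal.ofReal (p * q^(n-1)) := by
    intro n hn
    rw [hν n, hdist n hn]
  -- second moment lintegral
  have hFmeas : Measurable (fun n : ℕ => ENNReal.ofReal ((n:ℝ)^2)) :=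
    measurable_of_countable _
  have hkey : ∫⁻ ω, ENNReal.ofReal ((Z ω : ℝ)^2) ∂ℙ = ENNReal.ofReal (∑' n, f2 n) := by
    have h1 : ∫⁻ ω, ENNReal.ofReal ((Z ω : ℝ)^2) ∂ℙ
        = ∫⁻ n, ENNReal.ofReal ((n:ℝ)^2) ∂ν := by
      rw [hν_def, lintegral_map hFmeas hZ]
    rw [h1, lintegral_countable']
    have he : ∀ n : ℕ, ENNReal.ofReal ((n:ℝ)^2) * ν {n} = ENNReal.ofReal (f2 n) := by
      intro n
      rcases Nat.eq_zero_or_pos n with h | h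
      · subst h; simp [hf2_def]
      · rw [hν1 n h, ← ENNReal.ofReal_mul (by positivity)]
    rw [tsum_congr he, ENNReal.ofReal_tsum_of_nonneg hf2nonneg hf2sum]
  have hmeasY : Measurable (fun ω => (Z ω : ℝ)) :=
    (measurable_of_countable (fun n : ℕ => (n:ℝ))).comp hZ
  have hmeasY2 : Measurable (fun ω => (Z ω : ℝ)^2) :=
    (measurable_of_countable (fun n : ℕ => (n:ℝ)^2)).comp hZ
  have hsqint : Integrable (fun ω => (Z ω : ℝ)^2) ℙ := by
    refine ⟨hmeasY2.aestronglyMeasurable, ?_⟩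
    rw [hasFiniteIntegral_iff_ofReal (ae_of_all _ fun ω => by positivity)]
    rw [hkey]
    exact ENNReal.ofReal_lt_top
  have hY : MemLp (fun ω => (Z ω : ℝ)) 2 ℙ :=
    (memLp_two_iff_integrable_sq hmeasY.aestronglyMeasurable).mpr hsqint
  have hint : Integrable (fun ω => (Z ω : ℝ)) ℙ := hY.integrable one_le_two
  have hEY : (∫ ω, (Z ω : ℝ)) = (B:ℝ) := by
    have hIg : Integrable (fun n : ℕ => (n:ℝ)) ν := by
      rw [hν_def]
      exact (integrable_map_measure
        (measurable_of_countable (fun n : ℕ => (n:ℝ))).aestronglyMeasurable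
        hZ.aemeasurable).mpr hint
    have h1 : (∫ ω, (Z ω : ℝ)) = ∫ n, (n:ℝ) ∂ν := by
      rw [hν_def, integral_map hZ.aemeasurable
        (measurable_of_countable (fun n : ℕ => (n:ℝ))).aestronglyMeasurable]
    rw [h1, integral_countable' hIg]
    have he : ∀ n : ℕ, ν.real {n} • (n:ℝ) = f1 n := by
      intro n
      rcases Nat.eq_zero_or_pos n with h | h
      · subst h; simp [hf1_def]
      · rw [measureReal_def, hν1 n h, ENNReal.toReal_ofReal (by positivity), smul_eq_mul]
        simp only [hf1_def]; ring
    rw [tsum_congr he, hf1sum.tsum_eq]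
  have hEY2 : (∫ ω, (Z ω : ℝ)^2) ≤ 2 * (B:ℝ)^2 := by
    have hIg : Integrable (fun n : ℕ => (n:ℝ)^2) ν := by
      rw [hν_def]
      exact (integrable_map_measure
        (measurable_of_countable (fun n : ℕ => (n:ℝ)^2)).aestronglyMeasurable
        hZ.aemeasurable).mpr hsqint
    have h1 : (∫ ω, (Z ω : ℝ)^2) = ∫ n, (n:ℝ)^2 ∂ν := by
      rw [hν_def, integral_map hZ.aemeasurable
        (measurable_of_countable (fun n : ℕ => (n:ℝ)^2)).aestronglyMeasurable]
    rw [h1, integral_countable' hIg]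
    have he : ∀ n : ℕ, ν.real {n} • ((n:ℝ)^2) = f2 n := by
      intro n
      rcases Nat.eq_zero_or_pos n with h | h
      · subst h; simp [hf2_def]
      · rw [measureReal_def, hν1 n h, ENNReal.toReal_ofReal (by positivity), smul_eq_mul]
        simp only [hf2_def]; ring
    rw [tsum_congr he]
    exact hf2bound
  refine ⟨hY, hEY, ?_⟩
  rw [variance_eq_sub hY]
  have hpow : (∫ ω, ((fun ω => (Z ω : ℝ))^2) ω) = ∫ ω, (Z ω : ℝ)^2 := by
    simp [Pi.pow_apply]
  have h2 := sq_nonneg (∫ ω, (Z ω : ℝ))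
  simp only [Pi.pow_apply]
  nlinarith [hEY2]

/-- PIM-tree L2 pull loop with height H = log_B P − log_B log_B P and threshold
K = B·H: queries advance one level per round, so the loop terminates after at most H rounds;
the total pull communication (sizes of all pulled nodes, each geometric with mean B, at most
S/K pulled per round over ≤ H rounds, nodes placed uniformly at random over P modules) is
O(S) whp, i.e. O(1) per query amortized over a batch of size S = Ω(P·log P·B·log_B P). -/
theorem stmt_11 :
    ∀ c : ℝ, 0 < c → ∃ C : ℝ, 0 < C ∧ ∃ c' : ℝ, 1 ≤ c' ∧
    ∀ (P B H K M : ℕ) (S : ℝ), 2 ≤ P → 2 ≤ B →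
    ((H : ℝ) = Real.logb B P - Real.logb B (Real.logb B P)) →
    (K = B * H) →
    (c * ((P : ℝ) * Real.log P * B * Real.logb B P) ≤ S) →
    ((M : ℝ) ≤ H * (S / K)) →
    ∀ (level : ℕ → ℕ), level 0 ≤ H → (∀ t, level t ≠ 0 → level (t + 1) < level t) →
    ∀ (Ω : Type) [MeasureSpace Ω] [IsProbabilityMeasure (ℙ : Measure Ω)]
      (X : Fin M → Ω → Fin P) (Sz : Fin M → Ω → ℕ),
      (∀ j, Measurable (X j)) → (∀ j, Measurable (Sz j)) →
      iIndepFun (fun j ω => (X j ω, Sz j ω)) ℙ →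
      (∀ j b, ℙ {ω | X j ω = b} = (P : ENNReal)⁻¹) →
      (∀ j, ∀ s : ℕ, 1 ≤ s →
        ℙ {ω | Sz j ω = s} =
          ENNReal.ofReal ((1 / (B : ℝ)) * (1 - 1 / (B : ℝ)) ^ (s - 1))) →
      ((∃ T ≤ H, level T = 0) ∧
        1 - ENNReal.ofReal ((P : ℝ) ^ (-c')) ≤
          ℙ {ω | ∑ j, (Sz j ω : ℝ) ≤ C * S}) := by
  intro c hc
  set a : ℝ := Real.log 2 - Real.exp (-1) with ha_def
  have ha : 0 < a := by
    rw [ha_def]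
    have h1 : (0.6931471803 : ℝ) < Real.log 2 := Real.log_two_gt_d9
    have h2 : (2.7182818283 : ℝ) < Real.exp 1 := Real.exp_one_gt_d9
    have h3 : Real.exp (-1:ℝ) = (Real.exp 1)⁻¹ := by
      rw [Real.exp_neg]
    have h4 : Real.exp (-1:ℝ) < 0.368 := by
      rw [h3]
      rw [inv_lt_iff_one_lt_mul₀ (by positivity)]
      nlinarith
    linarith
  refine ⟨2 + Real.sqrt (2/(c*a)), by positivity, 1, le_refl 1, ?_⟩
  set C : ℝ := 2 + Real.sqrt (2/(c*a)) with hC_def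
  have hC2 : 2 ≤ C := by
    rw [hC_def]; nlinarith [Real.sqrt_nonneg (2/(c*a))]
  have hCsq : 2/(c*a) ≤ (C-1)^2 := by
    have h1 : Real.sqrt (2/(c*a)) ^ 2 = 2/(c*a) := Real.sq_sqrt (by positivity)
    nlinarith [Real.sqrt_nonneg (2/(c*a))]
  intro P B H K M S hP hB hH hK hS hM level hlev0 hlevdec Ω _ _ X Sz hXmeas hSzmeas hIndep hXdist hSzdist
  refine ⟨aux_term H level hlev0 hlevdec, ?_⟩
  -- basic positivity
  have hP1 : (1:ℝ) < (P:ℕ) := by exact_mod_cast hP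
  have hB1 : (1:ℝ) < (B:ℕ) := by exact_mod_cast hB
  have hP0 : (0:ℝ) < P := by linarith
  have hB0 : (0:ℝ) < B := by linarith
  have hlogP : 0 < Real.log P := Real.log_pos hP1
  have hlogB : 0 < Real.log B := Real.log_pos hB1
  have hlogb : 0 < Real.logb B P := div_pos hlogP hlogB
  have hSpos : 0 < S := lt_of_lt_of_le (by positivity) hS
  rcases Nat.eq_zero_or_pos H with hH0 | hH1
  · -- trivial case: M = 0
    have hM0 : M = 0 := by
      have : (M:ℝ) ≤ 0 := by
        rw [hH0] at hM; simpa using hM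
      exact_mod_cast le_antisymm (by exact_mod_cast this) (Nat.zero_le M)
    subst hM0
    have hset : {ω : Ω | ∑ j : Fin 0, (Sz j ω : ℝ) ≤ C * S} = Set.univ := by
      ext ω
      simp only [Set.mem_setOf_eq, Set.mem_univ, iff_true, Finset.univ_eq_empty,
        Finset.sum_empty]
      positivity
    rw [hset, measure_univ]
    exact tsub_le_self
  · -- main case
    have hK0 : (K:ℝ) = (B:ℝ) * (H:ℝ) := by exact_mod_cast hK
    have hHr1 : (1:ℝ) ≤ (H:ℝ) := by exact_mod_cast hH1
    have hKpos : (0:ℝ) < K := by rw [hK0]; nlinarith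
    have hMB : (M:ℝ) * B ≤ S := by
      have heq : (H:ℝ) * (S / (K:ℝ)) = S / B := by
        rw [hK0]
        field_simp
      rw [heq] at hM
      rw [← le_div_iff₀ hB0] at *
      exact hM
    -- the random variables
    set Y : Fin M → Ω → ℝ := fun j ω => (Sz j ω : ℝ) with hY_def
    have hmom := fun j => aux_moments hB (Sz j) (hSzmeas j) (hSzdist j)
    have hYmem : ∀ j, MemLp (Y j) 2 ℙ := fun j => (hmom j).1
    have hYint : ∀ j, Integrable (Y j) ℙ := fun j => (hYmem j).integrable one_le_two
    have hEY : ∀ j, (∫ ω, Y j ω) = (B:ℝ) := fun j => (hmom j).2.1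
    have hVarY : ∀ j, variance (Y j) ℙ ≤ 2 * (B:ℝ)^2 := fun j => (hmom j).2.2
    -- independence
    have hind : iIndepFun Y ℙ := by
      have := hIndep.comp (fun j (p : Fin P × ℕ) => (p.2 : ℝ))
        (fun j => measurable_from_nat.comp measurable_snd)
      exact this
    have hpair : ∀ (i j : Fin M), i ≠ j → IndepFun (Y i) (Y j) ℙ :=
      fun i j hij => hind.indepFun hij
    -- sum
    set T : Ω → ℝ := ∑ j, Y j with hT_def
    have hTapp : ∀ ω, T ω = ∑ j, Y j ω := fun ω => by
      rw [hT_def]; simp [Finset.sum_apply]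
    have hTmem : MemLp T 2 ℙ := memLp_finset_sum' _ (fun j _ => hYmem j)
    have hTE : (∫ ω, T ω) = (M:ℝ) * B := by
      have h1 : (∫ ω, T ω) = ∑ j, ∫ ω, Y j ω := by
        simp_rw [hTapp]
        exact integral_finset_sum _ (fun j _ => hYint j)
      rw [h1]
      simp [hEY, Finset.sum_const, Finset.card_univ]
    have hTvar : variance T ℙ ≤ (M:ℝ) * (2 * (B:ℝ)^2) := by
      rw [hT_def, IndepFun.variance_sum (fun j _ => hYmem j)
        (fun i _ j _ hij => hpair i j hij)]
      calc ∑ j, variance (Y j) ℙ ≤ ∑ _j : Fin M, 2 * (B:ℝ)^2 :=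
            Finset.sum_le_sum (fun j _ => hVarY j)
        _ = (M:ℝ) * (2 * (B:ℝ)^2) := by
            simp [Finset.sum_const, Finset.card_univ]
    -- Chebyshev
    have ht : (0:ℝ) < (C-1) * S := by nlinarith
    have hcheb := meas_ge_le_variance_div_sq (μ := ℙ) hTmem ht
    -- numeric bound
    have hSa : c * ((P:ℝ) * (B:ℝ) * a) ≤ S := by
      have h1 := aux_S_lower hP hB hH hH1
      calc c * ((P:ℝ) * (B:ℝ) * a) ≤ c * ((P:ℝ) * Real.log P * B * Real.logb B P) := by
            have : (P:ℝ) * (B:ℝ) * a ≤ (P:ℝ) * Real.log P * B * Real.logb B P := by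
              have h2 : (P:ℝ) * (B:ℝ) * a ≤ (P:ℝ) * (B:ℝ) * (Real.log P * Real.logb B P) := by
                apply mul_le_mul_of_nonneg_left h1 (by positivity)
              calc (P:ℝ) * (B:ℝ) * a ≤ (P:ℝ) * (B:ℝ) * (Real.log P * Real.logb B P) := h2
                _ = (P:ℝ) * Real.log P * B * Real.logb B P := by ring
            exact mul_le_mul_of_nonneg_left this hc.le
        _ ≤ S := hS
    have hnum : variance T ℙ / ((C-1)*S)^2 ≤ (P:ℝ)⁻¹ := by
      have h1 : variance T ℙ ≤ 2 * S * B := by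
        calc variance T ℙ ≤ (M:ℝ) * (2 * (B:ℝ)^2) := hTvar
          _ = ((M:ℝ) * B) * (2 * B) := by ring
          _ ≤ S * (2 * B) := mul_le_mul_of_nonneg_right hMB (by positivity)
          _ = 2 * S * B := by ring
      have hpos2 : (0:ℝ) < ((C-1)*S)^2 := by positivity
      rw [div_le_iff₀ hpos2]
      have e1 : 2/(c*a) * (c * ((P:ℝ)*(B:ℝ)*a)) = 2*(P:ℝ)*(B:ℝ) := by
        field_simp
      have e2 : 2*(P:ℝ)*(B:ℝ) ≤ (C-1)^2 * S := by
        calc 2*(P:ℝ)*(B:ℝ) = 2/(c*a) * (c*((P:ℝ)*(B:ℝ)*a)) := e1.symm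
          _ ≤ (C-1)^2 * S := by
              apply mul_le_mul hCsq hSa (by positivity) (by positivity)
      have e3 : (P:ℝ)⁻¹ * (2*(P:ℝ)*(B:ℝ)) * S = 2*S*(B:ℝ) := by
        field_simp
      calc variance T ℙ ≤ 2*S*(B:ℝ) := h1
        _ = (P:ℝ)⁻¹ * (2*(P:ℝ)*(B:ℝ)) * S := e3.symm
        _ ≤ (P:ℝ)⁻¹ * ((C-1)^2*S) * S := by
            apply mul_le_mul_of_nonneg_right
              (mul_le_mul_of_nonneg_left e2 (by positivity)) hSpos.le
        _ = (P:ℝ)⁻¹ * ((C-1)*S)^2 := by ring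
    -- event and conclusion
    have hAmeas : MeasurableSet {ω : Ω | ∑ j, (Sz j ω : ℝ) ≤ C*S} :=
      measurableSet_le
        (Finset.measurable_sum _ (fun j _ => measurable_from_nat.comp (hSzmeas j)))
        measurable_const
    have hsub : {ω : Ω | ∑ j, (Sz j ω : ℝ) ≤ C*S}ᶜ ⊆
        {ω : Ω | (C-1)*S ≤ |T ω - ∫ x, T x|} := by
      intro ω hω
      simp only [Set.mem_compl_iff, Set.mem_setOf_eq, not_le] at hω ⊢
      have hTω : C*S < T ω := by rw [hTapp]; exact hω
      have h2 : (C-1)*S ≤ T ω - ∫ x, T x := by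
        rw [hTE]
        linarith [hTω, hMB]
      exact le_trans h2 (le_abs_self _)
    have hcompl : ℙ {ω : Ω | ∑ j, (Sz j ω : ℝ) ≤ C*S}ᶜ ≤ ENNReal.ofReal ((P:ℝ)⁻¹) := by
      refine le_trans (measure_mono hsub) (le_trans ?_ (ENNReal.ofReal_le_ofReal hnum))
      exact hcheb
    have heq : ℙ {ω : Ω | ∑ j, (Sz j ω : ℝ) ≤ C*S}
        = 1 - ℙ ({ω : Ω | ∑ j, (Sz j ω : ℝ) ≤ C*S}ᶜ) := by
      rw [← prob_add_prob_compl (μ := ℙ) hAmeas,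
        ENNReal.add_sub_cancel_right (measure_ne_top _ _)]
    rw [heq]
    have hc1 : ((P:ℝ)^(-(1:ℝ))) = (P:ℝ)⁻¹ := Real.rpow_neg_one _
    rw [hc1]
    exact tsub_le_tsub_left hcompl 1
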